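/- arXiv:2506.22587 — 2 statements merged into one kernel-verified Lean document; each statement's English description precedes it below -/
import Mathlib

section
/- For every real T ≥ 1, ∫_{-T}^{T} e^{-i z²} dz = √π · e^{-iπ/4} + O(1/T), i.e. there is an absolute constant C such that |∫_{-T}^{T} e^{-i z²} dz − √π e^{-iπ/4}| ≤ C/T for all T ≥ 1. -/
open Real MeasureTheory Set Complex Filter Topology

set_option maxHeartbeats 1000000

noncomputable def fg (b : ℂ) (x : ℝ) : ℂ := Complex.exp (-(b * (x:ℂ)^2))

-- derivative helper
lemma fg_hasDeriv (b : ℂ) (x : ℝ) :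
    HasDerivAt (fg b) (-(b * (2*x)) * fg b x) x := by
  have h2 : HasDerivAt (fun y : ℂ => -(b * y^2)) (-(b * (2*(x:ℂ)))) (x:ℂ) := by
    simpa [mul_comm] using ((hasDerivAt_pow 2 (x:ℂ)).const_mul b).fun_neg
  have := ((Complex.hasDerivAt_exp (-(b * (x:ℂ)^2))).comp (x:ℂ) h2).comp_ofReal
  show HasDerivAt (fun y : ℝ => Complex.exp (-(b * (y:ℂ)^2))) _ x
  simpa [fg, mul_comm] using this

lemma fg_norm (b : ℂ) (x : ℝ) : ‖fg b x‖ = Real.exp (-(b.re * x^2)) := by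
  rw [fg, Complex.norm_exp,
    show ((x:ℂ)^2) = ((x^2:ℝ):ℂ) by push_cast; ring]
  congr 1
  simp only [Complex.neg_re, Complex.mul_re, Complex.ofReal_re, Complex.ofReal_im,
    mul_zero, sub_zero]

lemma fg_norm_le_one {b : ℂ} (hb : 0 ≤ b.re) (x : ℝ) : ‖fg b x‖ ≤ 1 := by
  rw [fg_norm]
  exact Real.exp_le_one_iff.mpr (by nlinarith [sq_nonneg x])

lemma tail_bound {ε T : ℝ} (hε : 0 < ε) (hT : 1 ≤ T) :
    ‖∫ x in Ioi T, fg ((ε:ℂ) + Complex.I) x‖ ≤ 1 / T := by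
  set b : ℂ := (ε:ℂ) + Complex.I with hbdef
  have hbre : b.re = ε := by simp [hbdef]
  have hb : 0 < b.re := by rw [hbre]; exact hε
  have hb0 : b ≠ 0 := by
    intro h; rw [h] at hb; simp at hb
  have hbnorm : 1 ≤ ‖b‖ := by
    have := Complex.abs_im_le_norm b
    have him : b.im = 1 := by simp [hbdef]
    rw [him] at this; simpa using this
  have hT0 : 0 < T := lt_of_lt_of_le one_pos hT
  -- antiderivative
  set g : ℝ → ℂ := fun x => -fg b x / (2 * b * x) with hgdef
  have hderiv : ∀ x ∈ Ici T, HasDerivAt g (fg b x + fg b x / (2 * b * x^2)) x := by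
    intro x hx
    have hx0 : (0:ℝ) < x := lt_of_lt_of_le hT0 hx
    have hxC : (x:ℂ) ≠ 0 := by exact_mod_cast hx0.ne'
    have hD : HasDerivAt (fun y : ℝ => 2 * b * (y:ℂ)) (2 * b) x := by
      simpa using (Complex.ofRealCLM.hasDerivAt (x := x)).const_mul (2*b)
    have hN : HasDerivAt (fun y : ℝ => -fg b y) (-(-(b * (2*x)) * fg b x)) x :=
      (fg_hasDeriv b x).neg
    have hd0 : 2 * b * (x:ℂ) ≠ 0 := by
      simp [hb0, hxC]
    have := hN.fun_div hD hd0
    convert this using 1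
    · rfl
    field_simp [fg]
    ring
  have hint1 : IntegrableOn (fg b) (Ioi T) volume := by
    have := integrable_cexp_neg_mul_sq hb
    exact (this.congr (Filter.Eventually.of_forall fun x => by simp [fg, neg_mul])).integrableOn
  have hrpow : IntegrableOn (fun x : ℝ => x ^ (-2 : ℝ)) (Ioi T) volume :=
    integrableOn_Ioi_rpow_of_lt (by norm_num) hT0
  have hquot_bound : ∀ x ∈ Ioi T, ‖fg b x / (2 * b * x^2)‖ ≤ (1/2) * x ^ (-2:ℝ) := by
    intro x hx
    have hx0 : (0:ℝ) < x := lt_of_lt_of_le hT0 (le_of_lt hx)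
    rw [norm_div]
    have hden : ‖(2 * b * (x:ℂ)^2)‖ = 2 * ‖b‖ * x^2 := by
      rw [show ((x:ℂ)^2) = ((x^2:ℝ):ℂ) by push_cast; ring, norm_mul, norm_mul]
      norm_num [Complex.norm_real, abs_of_pos (pow_pos hx0 2)]
    rw [hden, Real.rpow_neg hx0.le]
    have h1 : ‖fg b x‖ ≤ 1 := fg_norm_le_one hb.le x
    have hx2 : (0:ℝ) < x^2 := pow_pos hx0 2
    have : (x:ℝ) ^ (2:ℝ) = x ^ 2 := by
      rw [← Real.rpow_natCast x 2]; norm_num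
    rw [this]
    rw [div_le_iff₀ (by positivity)]
    calc ‖fg b x‖ ≤ 1 := h1
      _ ≤ 1/2 * (x^2)⁻¹ * (2 * ‖b‖ * x^2) := by
          rw [show 1/2 * (x^2)⁻¹ * (2 * ‖b‖ * x^2) = ‖b‖ * ((x^2)⁻¹ * x^2) by ring,
            inv_mul_cancel₀ hx2.ne']
          simpa using hbnorm
  have hquot_meas : AEStronglyMeasurable (fun x : ℝ => fg b x / (2 * b * x^2))
      (volume.restrict (Ioi T)) := by
    apply ContinuousOn.aestronglyMeasurable _ measurableSet_Ioi
    apply ContinuousOn.div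
    · exact fun x _ => (fg_hasDeriv b x).continuousAt.continuousWithinAt
    · fun_prop
    · intro x hx
      have hx0 : (0:ℝ) < x := lt_of_lt_of_le hT0 (le_of_lt hx)
      have hxC : (x:ℂ) ≠ 0 := by exact_mod_cast hx0.ne'
      simp [hb0, hxC]
  have hint2 : IntegrableOn (fun x : ℝ => fg b x / (2 * b * x^2)) (Ioi T) volume := by
    apply Integrable.mono' (hrpow.const_mul (1/2)) hquot_meas
    exact (ae_restrict_iff' measurableSet_Ioi).mpr (Filter.Eventually.of_forall
      (fun x hx => by simpa using hquot_bound x hx))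
  have hgtendsto : Tendsto g atTop (𝓝 0) := by
    have hb2 : Tendsto (fun x : ℝ => 1 / (2 * x)) atTop (𝓝 0) := by
      have := tendsto_inv_atTop_zero.comp
        (tendsto_id.const_mul_atTop (show (0:ℝ) < 2 by norm_num))
      exact this.congr fun x => by simp [Function.comp_apply, one_div]
    refine squeeze_zero_norm' ?_ hb2
    filter_upwards [Filter.eventually_ge_atTop 1] with x hx
    have hx0 : (0:ℝ) < x := lt_of_lt_of_le one_pos hx
    rw [hgdef]
    simp only [norm_div, norm_neg]
    have hden : ‖(2 * b * (x:ℂ))‖ = 2 * ‖b‖ * x := by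
      rw [norm_mul, norm_mul]
      norm_num [Complex.norm_real, abs_of_pos hx0]
    rw [hden]
    rw [div_le_div_iff₀ (by positivity) (by positivity)]
    calc ‖fg b x‖ * (2 * x) ≤ 1 * (2*x) := by
          have := fg_norm_le_one hb.le x
          nlinarith
      _ ≤ 1 * (2 * ‖b‖ * x) := by nlinarith
  have key : ∫ x in Ioi T, (fg b x + fg b x / (2 * b * x^2)) = 0 - g T :=
    integral_Ioi_of_hasDerivAt_of_tendsto' hderiv (hint1.add hint2) hgtendsto
  rw [integral_add hint1 hint2] at key
  have heq : ∫ x in Ioi T, fg b x = -g T - ∫ x in Ioi T, fg b x / (2 * b * x^2) := by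
    rw [eq_sub_iff_add_eq]
    linear_combination key
  rw [heq]
  have h1 : ‖g T‖ ≤ 1 / (2 * T) := by
    rw [hgdef]
    simp only [norm_div, norm_neg]
    have hden : ‖(2 * b * (T:ℂ))‖ = 2 * ‖b‖ * T := by
      rw [norm_mul, norm_mul]
      norm_num [Complex.norm_real, abs_of_pos hT0]
    rw [hden, div_le_div_iff₀ (by positivity) (by positivity)]
    calc ‖fg b T‖ * (2 * T) ≤ 1 * (2*T) := by
          have := fg_norm_le_one hb.le T
          nlinarith
      _ ≤ 1 * (2 * ‖b‖ * T) := by nlinarith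
  have h2 : ‖∫ x in Ioi T, fg b x / (2 * b * x^2)‖ ≤ 1 / (2 * T) := by
    have hb' : ∀ᵐ x ∂(volume.restrict (Ioi T)), ‖fg b x / (2 * b * x^2)‖ ≤ (1/2) * x ^ (-2:ℝ) :=
      (ae_restrict_iff' measurableSet_Ioi).mpr (Filter.Eventually.of_forall
        (fun x hx => hquot_bound x hx))
    have := norm_integral_le_of_norm_le (hrpow.const_mul (1/2)) hb'
    refine this.trans ?_
    rw [integral_const_mul, integral_Ioi_rpow_of_lt (by norm_num) hT0]
    rw [show (-2:ℝ) + 1 = -1 by norm_num, Real.rpow_neg_one,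
      show -T⁻¹ / (-1:ℝ) = T⁻¹ by ring,
      show (1:ℝ)/(2*T) = 1/2 * T⁻¹ by rw [one_div, mul_inv]; ring]
  calc ‖-g T - ∫ x in Ioi T, fg b x / (2 * b * x^2)‖
      ≤ ‖g T‖ + ‖∫ x in Ioi T, fg b x / (2 * b * x^2)‖ := by
        simpa using norm_sub_le (-g T) _
    _ ≤ 1/(2*T) + 1/(2*T) := add_le_add h1 h2
    _ = 1 / T := by ring

lemma diff_bound {ε T : ℝ} (hε : 0 < ε) (hT : 1 ≤ T) :
    ‖(∫ x in (-T)..T, fg ((ε:ℂ) + Complex.I) x) - ∫ x : ℝ, fg ((ε:ℂ) + Complex.I) x‖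
      ≤ 2 / T := by
  set b : ℂ := (ε:ℂ) + Complex.I with hbdef
  have hb : 0 < b.re := by simp [hbdef, hε]
  have hint : Integrable (fg b) := by
    exact (integrable_cexp_neg_mul_sq hb).congr
      (Filter.Eventually.of_forall fun x => by simp [fg, neg_mul])
  have hTT : -T ≤ T := by linarith
  have h1 : ∫ x : ℝ, fg b x
      = (∫ x in Iic (-T), fg b x) + ((∫ x in Ioc (-T) T, fg b x) + ∫ x in Ioi T, fg b x) := by
    rw [← setIntegral_union Ioc_disjoint_Ioi_same measurableSet_Ioi
        hint.integrableOn hint.integrableOn, Ioc_union_Ioi_eq_Ioi hTT,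
      intervalIntegral.integral_Iic_add_Ioi hint.integrableOn hint.integrableOn]
  have h2 : ∫ x in Iic (-T), fg b x = ∫ x in Ioi T, fg b x := by
    rw [← integral_comp_neg_Ioi]
    congr 1
    funext x
    simp [fg]
  rw [intervalIntegral.integral_of_le hTT, h1, h2]
  have htail := tail_bound hε hT
  calc ‖(∫ x in Ioc (-T) T, fg b x) -
        ((∫ x in Ioi T, fg b x) + ((∫ x in Ioc (-T) T, fg b x) + ∫ x in Ioi T, fg b x))‖
      = ‖(∫ x in Ioi T, fg b x) + (∫ x in Ioi T, fg b x)‖ := by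
        rw [show (∫ x in Ioc (-T) T, fg b x) -
          ((∫ x in Ioi T, fg b x) + ((∫ x in Ioc (-T) T, fg b x) + ∫ x in Ioi T, fg b x))
          = -((∫ x in Ioi T, fg b x) + (∫ x in Ioi T, fg b x)) by ring, norm_neg]
    _ ≤ ‖∫ x in Ioi T, fg b x‖ + ‖∫ x in Ioi T, fg b x‖ := norm_add_le _ _
    _ ≤ 1/T + 1/T := add_le_add htail htail
    _ = 2 / T := by ring

lemma fresnel_value : ((π : ℂ) / Complex.I) ^ (1/2 : ℂ)
    = (Real.sqrt π : ℂ) * Complex.exp (-(π / 4 : ℝ) * Complex.I) := by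
  have hne : ((π : ℂ) / Complex.I) ≠ 0 := by
    simp [div_eq_mul_inv, Complex.I_ne_zero, Complex.ofReal_ne_zero, pi_ne_zero]
  have habs : ‖(π:ℂ) / Complex.I‖ = π := by
    rw [norm_div]
    simp [abs_of_pos pi_pos]
  have harg : ((π:ℂ) / Complex.I).arg = -(π/2) := by
    rw [Complex.div_I, show -((π:ℂ) * Complex.I) = (π:ℝ) * (-Complex.I) by push_cast; ring,
      Complex.arg_real_mul _ pi_pos, Complex.arg_neg_I]
  have hlog : Complex.log ((π:ℂ) / Complex.I)
      = (Real.log π : ℂ) + ((-(π/2) : ℝ) : ℂ) * Complex.I := by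
    rw [Complex.log, habs, harg]
  have hsqrt : Real.sqrt π = Real.exp (Real.log π / 2) := by
    rw [Real.sqrt_eq_rpow, Real.rpow_def_of_pos pi_pos]
    ring_nf
  rw [Complex.cpow_def_of_ne_zero hne, hlog, hsqrt, Complex.ofReal_exp, ← Complex.exp_add]
  congr 1
  push_cast
  ring

lemma gauss_tendsto :
    Tendsto (fun ε : ℝ => ∫ x : ℝ, fg ((ε:ℂ) + Complex.I) x) (𝓝[>] (0:ℝ))
      (𝓝 ((Real.sqrt π : ℂ) * Complex.exp (-(π / 4 : ℝ) * Complex.I))) := by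
  have hval : ∀ ε : ℝ, 0 < ε →
      ∫ x : ℝ, fg ((ε:ℂ) + Complex.I) x = ((π:ℂ) / ((ε:ℂ) + Complex.I)) ^ (1/2 : ℂ) := by
    intro ε hε
    rw [← integral_gaussian_complex (by simp [hε] : 0 < (((ε:ℂ) + Complex.I)).re)]
    congr 1
    funext x
    rw [fg]
    congr 1
    ring
  have h0 : ContinuousAt (fun ε : ℝ => (π:ℂ) / ((ε:ℂ) + Complex.I)) 0 := by
    apply ContinuousAt.div continuousAt_const (by fun_prop)
    simp [Complex.I_ne_zero]
  have him : ((π:ℂ) / Complex.I).im ≠ 0 := by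
    rw [Complex.div_I]
    simp [pi_ne_zero]
  have h1 : ContinuousAt (fun z : ℂ => z ^ (1/2 : ℂ)) ((π:ℂ) / Complex.I) :=
    continuousAt_cpow_const (Complex.mem_slitPlane_iff.mpr (Or.inr him))
  have heval : (π:ℂ) / (((0:ℝ):ℂ) + Complex.I) = (π:ℂ) / Complex.I := by norm_num
  have h2 : Tendsto (fun ε : ℝ => ((π:ℂ) / ((ε:ℂ) + Complex.I)) ^ (1/2:ℂ)) (𝓝[>] (0:ℝ))
      (𝓝 (((π:ℂ) / Complex.I) ^ (1/2:ℂ))) := by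
    have ht0 : Tendsto (fun ε : ℝ => (π:ℂ) / ((ε:ℂ) + Complex.I)) (𝓝[>] (0:ℝ))
        (𝓝 ((π:ℂ) / Complex.I)) := by
      have h' : Tendsto (fun ε : ℝ => (π:ℂ) / ((ε:ℂ) + Complex.I)) (𝓝 (0:ℝ))
          (𝓝 ((π:ℂ) / (((0:ℝ):ℂ) + Complex.I))) := h0.tendsto
      rw [heval] at h'
      exact h'.mono_left nhdsWithin_le_nhds
    exact (h1.tendsto.comp ht0 : _)
  rw [← fresnel_value]
  refine Tendsto.congr' ?_ h2
  filter_upwards [self_mem_nhdsWithin] with ε hε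
  exact (hval ε hε).symm

lemma interval_tendsto (T : ℝ) (hT : 1 ≤ T) :
    Tendsto (fun ε : ℝ => ∫ x in (-T)..T, fg ((ε:ℂ) + Complex.I) x) (𝓝[>] (0:ℝ))
      (𝓝 (∫ x in (-T)..T, fg Complex.I x)) := by
  have hTT : -T ≤ T := by linarith
  simp_rw [intervalIntegral.integral_of_le hTT]
  apply tendsto_integral_filter_of_dominated_convergence (bound := fun _ : ℝ => (1:ℝ))
  · exact Filter.Eventually.of_forall fun ε =>
      (Continuous.aestronglyMeasurable (by unfold fg; fun_prop))
  · filter_upwards [self_mem_nhdsWithin] with ε hε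
    refine ae_of_all _ fun x => ?_
    exact fg_norm_le_one (by simp [le_of_lt (show (0:ℝ) < ε from hε)]) x
  · exact (integrableOn_const_iff (C := (1:ℝ))).mpr (Or.inr measure_Ioc_lt_top)
  · refine ae_of_all _ fun x => ?_
    have hc : Continuous fun ε : ℝ => fg ((ε:ℂ) + Complex.I) x := by
      unfold fg; fun_prop
    have h := (hc.tendsto 0).mono_left (nhdsWithin_le_nhds (s := Set.Ioi (0:ℝ)))
    have h00 : (((0:ℝ):ℂ) + Complex.I) = Complex.I := by norm_num
    rw [h00] at h
    exact h

theorem stmt6 : ∃ C : ℝ, 0 < C ∧ ∀ T : ℝ, 1 ≤ T →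
    ‖(∫ z in (-T)..T, Complex.exp (-(Complex.I * (z : ℂ) ^ 2))) -
        (Real.sqrt π : ℂ) * Complex.exp (-(π / 4 : ℝ) * Complex.I)‖ ≤ C / T := by
  refine ⟨2, by norm_num, fun T hT => ?_⟩
  have h1 : Tendsto (fun ε : ℝ =>
      (∫ x in (-T)..T, fg ((ε:ℂ) + Complex.I) x) - ∫ x : ℝ, fg ((ε:ℂ) + Complex.I) x)
      (𝓝[>] (0:ℝ))
      (𝓝 ((∫ x in (-T)..T, fg Complex.I x) -
        (Real.sqrt π : ℂ) * Complex.exp (-(π / 4 : ℝ) * Complex.I))) :=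
    (interval_tendsto T hT).sub gauss_tendsto
  have h2 : ∀ᶠ (ε : ℝ) in 𝓝[>] (0:ℝ), ‖(∫ x in (-T)..T, fg ((ε:ℂ) + Complex.I) x)
      - ∫ x : ℝ, fg ((ε:ℂ) + Complex.I) x‖ ≤ 2 / T := by
    filter_upwards [self_mem_nhdsWithin] with ε hε
    exact diff_bound hε hT
  have := le_of_tendsto h1.norm h2
  simpa only [fg] using this
end

section
/- Let α ≥ 2, m, k positive integers, and x ≥ 2 a real number. Let F : ℝ → ℝ be a locally integrable function with F(y) = O(y) for y ≥ 1 (i.e. |F(y)| ≤ C·y for all y ≥ 1). Then (α^{1/(mk)}/√π) ∫_{x}^{∞} F(x^{mk} e^{u/x}) exp(−u² α^{2/(mk)}) du = O(x^{mk−1} e^{−x²}). -/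
open MeasureTheory Real

lemma int_exp_aux (a b : ℝ) (hb : 0 < b) :
    ∫ u in Set.Ioi a, Real.exp (-b * u) = Real.exp (-b * a) / b := by
  have hderiv : ∀ u ∈ Set.Ici a, HasDerivAt (fun u => -Real.exp (-b * u) / b)
      (Real.exp (-b * u)) u := by
    intro u _
    have h1 : HasDerivAt (fun u : ℝ => -b * u) (-b) u := by
      simpa using (hasDerivAt_id u).const_mul (-b)
    have h2 := (h1.exp).neg.div_const b
    refine h2.congr_deriv ?_
    field_simp
  have hint : IntegrableOn (fun u => Real.exp (-b * u)) (Set.Ioi a) :=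
    exp_neg_integrableOn_Ioi a hb
  have htend : Filter.Tendsto (fun u => -Real.exp (-b * u) / b) Filter.atTop (nhds 0) := by
    have h1 : Filter.Tendsto (fun u : ℝ => b * u) Filter.atTop Filter.atTop :=
      Filter.tendsto_id.const_mul_atTop hb
    have h2 := (Real.tendsto_exp_neg_atTop_nhds_zero.comp h1).neg.div_const b
    simpa [Function.comp, neg_mul] using h2
  have := integral_Ioi_of_hasDerivAt_of_tendsto' hderiv hint htend
  rw [this]; ring

set_option maxHeartbeats 1000000 in
theorem stmt7 (m k : ℕ) (hm : 0 < m) (hk : 0 < k) (C : ℝ) (hC : 0 ≤ C) :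
    ∃ C' : ℝ, ∀ x α : ℝ, 2 ≤ x → 2 ≤ α → ∀ F : ℝ → ℝ,
      LocallyIntegrable F volume →
      (∀ y : ℝ, 1 ≤ y → |F y| ≤ C * y) →
      |(α ^ ((1 : ℝ) / (m * k)) / Real.sqrt π) *
          ∫ u in Set.Ioi x,
            F (x ^ (m * k) * Real.exp (u / x)) * Real.exp (-u ^ 2 * α ^ ((2 : ℝ) / (m * k)))|
        ≤ C' * x ^ (m * k - 1) * Real.exp (-x ^ 2) := by
  refine ⟨3 * C, ?_⟩
  intro x α hx hα F hFi hF
  have hx0 : (0:ℝ) < x := by linarith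
  have hα0 : (0:ℝ) < α := by linarith
  have hmk : (0:ℝ) < (m:ℝ) * k := by positivity
  set δ : ℝ := α ^ ((1:ℝ) / ((m:ℝ) * k)) with hδdef
  set γ : ℝ := α ^ ((2:ℝ) / ((m:ℝ) * k)) with hγdef
  have hδγ : δ ^ 2 = γ := by
    rw [hδdef, hγdef, ← Real.rpow_natCast (α ^ ((1:ℝ) / ((m:ℝ)*k))) 2,
      ← Real.rpow_mul hα0.le]
    congr 1
    ring
  have hδ1 : 1 ≤ δ := Real.one_le_rpow (by linarith) (by positivity)
  have hγ1 : 1 ≤ γ := by nlinarith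
  have hxn1 : (1:ℝ) ≤ x ^ (m * k) := one_le_pow₀ (by linarith)
  -- the majorant
  set A : ℝ := C * x ^ (m * k) * Real.exp (-4 * γ + 5) with hAdef
  have hA0 : 0 ≤ A := by positivity
  have hg : IntegrableOn (fun u => A * Real.exp (-x * u)) (Set.Ioi x) :=
    (exp_neg_integrableOn_Ioi x hx0).const_mul A
  have hbound : ∀ u ∈ Set.Ioi x,
      ‖F (x ^ (m * k) * Real.exp (u / x)) * Real.exp (-u ^ 2 * γ)‖
        ≤ A * Real.exp (-x * u) := by
    intro u hu
    rw [Set.mem_Ioi] at hu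
    have hy1 : (1:ℝ) ≤ x ^ (m * k) * Real.exp (u / x) := by
      have : (1:ℝ) ≤ Real.exp (u / x) :=
        Real.one_le_exp (div_nonneg (by linarith) hx0.le)
      nlinarith
    have hFb := hF _ hy1
    rw [norm_mul, Real.norm_eq_abs, Real.norm_eq_abs, Real.abs_exp]
    have h1 : |F (x ^ (m * k) * Real.exp (u / x))| * Real.exp (-u ^ 2 * γ)
        ≤ C * (x ^ (m * k) * Real.exp (u / x)) * Real.exp (-u ^ 2 * γ) := by
      apply mul_le_mul_of_nonneg_right hFb (Real.exp_nonneg _)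
    refine h1.trans ?_
    have hexp : Real.exp (u / x) * Real.exp (-u ^ 2 * γ)
        ≤ Real.exp (-4 * γ + 5) * Real.exp (-x * u) := by
      rw [← Real.exp_add, ← Real.exp_add]
      apply Real.exp_le_exp.mpr
      have hux : u / x ≤ 1 + (u - x) := by
        rw [div_le_iff₀ hx0]
        nlinarith
      have hu1 : (0:ℝ) ≤ (u - x) * (u - 1) := mul_nonneg (by linarith) (by linarith)
      have hu4 : (0:ℝ) ≤ (γ - 1) * (u ^ 2 - 4) :=
        mul_nonneg (by linarith) (by nlinarith)
      nlinarith [hu1, hu4, hux]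
    calc C * (x ^ (m * k) * Real.exp (u / x)) * Real.exp (-u ^ 2 * γ)
        = C * x ^ (m * k) * (Real.exp (u / x) * Real.exp (-u ^ 2 * γ)) := by ring
      _ ≤ C * x ^ (m * k) * (Real.exp (-4 * γ + 5) * Real.exp (-x * u)) := by
          apply mul_le_mul_of_nonneg_left hexp (by positivity)
      _ = A * Real.exp (-x * u) := by rw [hAdef]; ring
  have hkey : ‖∫ u in Set.Ioi x,
      F (x ^ (m * k) * Real.exp (u / x)) * Real.exp (-u ^ 2 * γ)‖
      ≤ ∫ u in Set.Ioi x, A * Real.exp (-x * u) := by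
    apply norm_integral_le_of_norm_le hg
    exact (ae_restrict_iff' measurableSet_Ioi).mpr (Filter.Eventually.of_forall hbound)
  have hval : ∫ u in Set.Ioi x, A * Real.exp (-x * u)
      = A * (Real.exp (-x * x) / x) := by
    rw [integral_const_mul, int_exp_aux x x hx0]
  rw [hval] at hkey
  rw [abs_mul]
  have hsqrtπ : 1 ≤ Real.sqrt π := by
    rw [show (1:ℝ) = Real.sqrt 1 by simp]
    exact Real.sqrt_le_sqrt (by linarith [Real.pi_gt_three])
  have hδ0 : 0 ≤ δ := by linarith
  have habs1 : |δ / Real.sqrt π| = δ / Real.sqrt π := abs_of_nonneg (by positivity)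
  rw [habs1]
  have step1 : δ / Real.sqrt π *
      |∫ u in Set.Ioi x, F (x ^ (m * k) * Real.exp (u / x)) * Real.exp (-u ^ 2 * γ)|
      ≤ δ / Real.sqrt π * (A * (Real.exp (-x * x) / x)) := by
    apply mul_le_mul_of_nonneg_left _ (by positivity)
    simpa [Real.norm_eq_abs] using hkey
  refine step1.trans ?_
  -- now pure computation: δ/√π * (C x^n e^{-4γ+5} e^{-x²}/x) ≤ 3C x^{n-1} e^{-x²}
  have hδe : δ ≤ Real.exp (4 * γ - 4) := by
    have := Real.add_one_le_exp (4 * γ - 4)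
    nlinarith
  have hδdiv : δ / Real.sqrt π ≤ Real.exp (4 * γ - 4) := by
    calc δ / Real.sqrt π ≤ δ / 1 := by
          apply div_le_div_of_nonneg_left hδ0 one_pos hsqrtπ
      _ = δ := div_one δ
      _ ≤ _ := hδe
  have hxpow : x ^ (m * k) = x ^ (m * k - 1) * x := by
    have h1mk : 1 ≤ m * k := Nat.one_le_iff_ne_zero.mpr (Nat.mul_ne_zero hm.ne' hk.ne')
    conv_lhs => rw [show m * k = (m * k - 1) + 1 by omega]
    rw [pow_succ]
  have hxx : -x * x = -x ^ 2 := by ring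
  rw [hAdef, hxx, hxpow]
  have hxp0 : (0:ℝ) ≤ x ^ (m * k - 1) := by positivity
  have hE : Real.exp (4*γ-4) * Real.exp (-4*γ+5) = Real.exp 1 := by
    rw [← Real.exp_add]; ring_nf
  have he3 : Real.exp 1 ≤ 3 := by
    linarith [Real.exp_one_lt_d9]
  have key : δ / Real.sqrt π * (C * (x ^ (m * k - 1) * x) * Real.exp (-4 * γ + 5) *
      (Real.exp (-x ^ 2) / x))
      = (δ / Real.sqrt π * Real.exp (-4 * γ + 5)) * (C * x ^ (m * k - 1) *
        Real.exp (-x ^ 2)) := by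
    have hxe : x * (Real.exp (-x ^ 2) / x) = Real.exp (-x ^ 2) :=
      mul_div_cancel₀ _ hx0.ne'
    calc δ / Real.sqrt π * (C * (x ^ (m * k - 1) * x) * Real.exp (-4 * γ + 5) *
        (Real.exp (-x ^ 2) / x))
        = (δ / Real.sqrt π * Real.exp (-4 * γ + 5)) * (C * x ^ (m * k - 1) *
          (x * (Real.exp (-x ^ 2) / x))) := by ring
      _ = _ := by rw [hxe]
  rw [key]
  have hfac : δ / Real.sqrt π * Real.exp (-4 * γ + 5) ≤ 3 := by
    calc δ / Real.sqrt π * Real.exp (-4 * γ + 5)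
        ≤ Real.exp (4*γ-4) * Real.exp (-4*γ+5) :=
          mul_le_mul_of_nonneg_right hδdiv (Real.exp_nonneg _)
      _ = Real.exp 1 := hE
      _ ≤ 3 := he3
  calc δ / Real.sqrt π * Real.exp (-4 * γ + 5) * (C * x ^ (m * k - 1) * Real.exp (-x ^ 2))
      ≤ 3 * (C * x ^ (m * k - 1) * Real.exp (-x ^ 2)) :=
        mul_le_mul_of_nonneg_right hfac (by positivity)
    _ = 3 * C * x ^ (m * k - 1) * Real.exp (-x ^ 2) := by ring
end
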